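/- Consider the self-reproducing Poisson algebra with $n$ generators defined by $[G_1, G_\alpha] = G_1 G_\alpha$ for $\alpha = 2, \dots, n$ and $[G_\alpha, G_\beta] = 0$ for $\alpha, \beta \geq 2$. In the extended graded algebra with ghosts $\eta^a$ and ghost momenta $\mathcal{P}_a$ ($[\mathcal{P}_a, \eta^b] = -\delta_a{}^b$), the element $\tilde{\Omega} = \eta^a G_a - G_a \eta^a \eta^1 \mathcal{P}_1$ (summation over $a = 1,\dots,n$) satisfies $[\tilde{\Omega}, \tilde{\Omega}] = 0$. -/

import Mathlib

open MvPolynomial Finset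

/-- The extended algebra `ℚ[G₁,…,Gₙ] ⊗ Λ(η¹,…,ηⁿ,𝒫₁,…,𝒫ₙ)`: an element is given by
its polynomial coefficient on each monomial in the anticommuting ghosts `η^a`
(index `Sum.inl a`) and ghost momenta `𝒫_a` (index `Sum.inr a`), the Grassmann
monomial attached to a subset `S` being the product of its generators in
increasing order of `idx`. -/
abbrev SA (n : ℕ) := Finset (Fin n ⊕ Fin n) → MvPolynomial (Fin n) ℚ

/-- Position of a Grassmann generator in the chosen ordering: ghosts first. -/
def idx {n : ℕ} : Fin n ⊕ Fin n → ℕ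
  | Sum.inl a => (a : ℕ)
  | Sum.inr a => n + (a : ℕ)

/-- The Koszul sign produced when merging two ordered Grassmann monomials. -/
def sgn {n : ℕ} (T U : Finset (Fin n ⊕ Fin n)) : ℚ :=
  (-1 : ℚ) ^ ((T ×ˢ U).filter (fun p => idx p.2 < idx p.1)).card

/-- The (super-commutative) product of the extended algebra. -/
noncomputable def amul {n : ℕ} (x y : SA n) : SA n :=
  fun S => ∑ T ∈ S.powerset, sgn T (S \ T) • (x T * y (S \ T))

/-- The unit of the extended algebra. -/
noncomputable def aone {n : ℕ} : SA n := fun S => if S = ∅ then 1 else 0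

/-- The generator `G_a`. -/
noncomputable def Gg {n : ℕ} (a : Fin n) : SA n := fun S => if S = ∅ then X a else 0

/-- The ghost `η^a`. -/
noncomputable def ηg {n : ℕ} (a : Fin n) : SA n := fun S => if S = {Sum.inl a} then 1 else 0

/-- The ghost momentum `𝒫_a`. -/
noncomputable def Pg {n : ℕ} (a : Fin n) : SA n := fun S => if S = {Sum.inr a} then 1 else 0

/-- The (even) derivative `∂/∂G_a`. -/
noncomputable def dG {n : ℕ} (a : Fin n) (x : SA n) : SA n := fun S => (pderiv a) (x S)

/-- Left derivative with respect to the Grassmann generator `i`. -/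
noncomputable def dL {n : ℕ} (i : Fin n ⊕ Fin n) (x : SA n) : SA n := fun S =>
  if i ∈ S then 0
  else ((-1 : ℚ) ^ (S.filter (fun j => idx j < idx i)).card) • x (insert i S)

/-- Right derivative with respect to the Grassmann generator `i`. -/
noncomputable def dR {n : ℕ} (i : Fin n ⊕ Fin n) (x : SA n) : SA n := fun S =>
  if i ∈ S then 0
  else ((-1 : ℚ) ^ (S.filter (fun j => idx i < idx j)).card) • x (insert i S)

/-- The graded Poisson bracket of the extended algebra, determined by
`[G_a, G_b] = C a b` (a polynomial in the `G`'s), `[𝒫_a, η^b] = -δ_a^b`, all other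
basic brackets zero, extended by the graded Leibniz rule:
original (`G`) part plus ghost part. -/
noncomputable def bra {n : ℕ} (C : Fin n → Fin n → MvPolynomial (Fin n) ℚ)
    (x y : SA n) : SA n :=
  (∑ a, ∑ b, C a b • amul (dG a x) (dG b y))
  - ∑ a, (amul (dR (Sum.inr a) x) (dL (Sum.inl a) y)
          + amul (dR (Sum.inl a) x) (dL (Sum.inr a) y))

section BRSTAux
variable {n : ℕ}

/-- An element supported on a single Grassmann monomial. -/
noncomputable def sing (T : Finset (Fin n ⊕ Fin n)) (p : MvPolynomial (Fin n) ℚ) : SA n :=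
  fun S => if S = T then p else 0

@[simp] lemma sing_zero (T : Finset (Fin n ⊕ Fin n)) : sing T (0 : MvPolynomial (Fin n) ℚ) = 0 := by
  funext S; simp [sing]

lemma sing_neg (T) (p : MvPolynomial (Fin n) ℚ) : sing T (-p) = - sing T p := by
  funext S; simp only [sing, Pi.neg_apply]; split <;> simp

lemma smul_sing (c : MvPolynomial (Fin n) ℚ) (T) (p) : c • sing T p = sing T (c * p) := by
  funext S; simp only [sing, Pi.smul_apply, smul_eq_mul]; split <;> simp

@[simp] lemma idx_inl (a : Fin n) : idx (Sum.inl a : Fin n ⊕ Fin n) = (a : ℕ) := rfl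
@[simp] lemma idx_inr (a : Fin n) : idx (Sum.inr a : Fin n ⊕ Fin n) = n + (a : ℕ) := rfl

lemma sgn_card (T U : Finset (Fin n ⊕ Fin n)) :
    sgn T U = (-1 : ℚ) ^ (∑ t ∈ T, ∑ u ∈ U, if idx u < idx t then 1 else 0) := by
  rw [sgn, Finset.card_filter, Finset.sum_product]

@[simp] lemma sgn_empty_right (T : Finset (Fin n ⊕ Fin n)) : sgn T ∅ = 1 := by
  simp [sgn_card]

@[simp] lemma sgn_empty_left (U : Finset (Fin n ⊕ Fin n)) : sgn ∅ U = 1 := by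
  simp [sgn_card]

lemma amul_sing_sing (T U : Finset (Fin n ⊕ Fin n)) (p q) :
    amul (sing T p) (sing U q) =
      if Disjoint T U then sing (T ∪ U) (sgn T U • (p * q)) else 0 := by
  funext S
  have h1 : ∀ V ∈ S.powerset,
      sgn V (S \ V) • (sing T p V * sing U q (S \ V))
        = if V = T then (if S \ V = U then sgn V (S \ V) • (p * q) else 0) else 0 := by
    intro V _
    simp only [sing]
    split_ifs <;> simp
  rw [show amul (sing T p) (sing U q) S
      = ∑ V ∈ S.powerset, sgn V (S \ V) • (sing T p V * sing U q (S \ V)) from rfl,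
    Finset.sum_congr rfl h1, Finset.sum_ite_eq' S.powerset T]
  by_cases hd : Disjoint T U
  · rw [if_pos hd]
    by_cases hS : S = T ∪ U
    · subst hS
      rw [if_pos (Finset.mem_powerset.mpr Finset.subset_union_left),
        if_pos (Finset.union_sdiff_cancel_left hd), sing, if_pos rfl,
        Finset.union_sdiff_cancel_left hd]
    · rw [sing, if_neg hS]
      by_cases hTS : T ∈ S.powerset
      · rw [if_pos hTS, if_neg]
        intro h
        exact hS (by rw [← h, Finset.union_sdiff_of_subset (Finset.mem_powerset.mp hTS)])
      · rw [if_neg hTS]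
  · rw [if_neg hd, Pi.zero_apply]
    by_cases hTS : T ∈ S.powerset
    · rw [if_pos hTS, if_neg]
      intro h
      exact hd (h ▸ (Finset.sdiff_disjoint (s := T) (t := S)).symm)
    · rw [if_neg hTS]

lemma amul_zero (x : SA n) : amul x 0 = 0 := by funext S; simp [amul]
lemma zero_amul (y : SA n) : amul 0 y = 0 := by funext S; simp [amul]
lemma amul_add_right (x y z : SA n) : amul x (y + z) = amul x y + amul x z := by
  funext S; simp [amul, mul_add, smul_add, Finset.sum_add_distrib]
lemma amul_add_left (x y z : SA n) : amul (x + y) z = amul x z + amul y z := by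
  funext S; simp [amul, add_mul, smul_add, Finset.sum_add_distrib]
lemma amul_sum_right {ι : Type*} (x : SA n) (s : Finset ι) (f : ι → SA n) :
    amul x (∑ i ∈ s, f i) = ∑ i ∈ s, amul x (f i) := by
  funext S
  simp only [amul, Finset.sum_apply, Finset.mul_sum, Finset.smul_sum]
  exact Finset.sum_comm
lemma amul_sum_left {ι : Type*} (y : SA n) (s : Finset ι) (f : ι → SA n) :
    amul (∑ i ∈ s, f i) y = ∑ i ∈ s, amul (f i) y := by
  funext S
  simp only [amul, Finset.sum_apply, Finset.sum_mul, Finset.smul_sum]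
  exact Finset.sum_comm

lemma dG_add (c : Fin n) (x y : SA n) : dG c (x + y) = dG c x + dG c y := by
  funext S; simp [dG]
lemma dG_sum {ι : Type*} (c : Fin n) (s : Finset ι) (f : ι → SA n) :
    dG c (∑ i ∈ s, f i) = ∑ i ∈ s, dG c (f i) := by
  funext S; simp [dG, Finset.sum_apply]
lemma dR_add (i : Fin n ⊕ Fin n) (x y : SA n) : dR i (x + y) = dR i x + dR i y := by
  funext S; simp only [dR, Pi.add_apply, smul_add]; split <;> simp
lemma dR_sum {ι : Type*} (i : Fin n ⊕ Fin n) (s : Finset ι) (f : ι → SA n) :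
    dR i (∑ j ∈ s, f j) = ∑ j ∈ s, dR i (f j) := by
  funext S; simp only [dR, Finset.sum_apply, Finset.smul_sum]; split <;> simp
lemma dL_add (i : Fin n ⊕ Fin n) (x y : SA n) : dL i (x + y) = dL i x + dL i y := by
  funext S; simp only [dL, Pi.add_apply, smul_add]; split <;> simp
lemma dL_sum {ι : Type*} (i : Fin n ⊕ Fin n) (s : Finset ι) (f : ι → SA n) :
    dL i (∑ j ∈ s, f j) = ∑ j ∈ s, dL i (f j) := by
  funext S; simp only [dL, Finset.sum_apply, Finset.smul_sum]; split <;> simp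

lemma dG_sing (c : Fin n) (T p) : dG c (sing T p) = sing T (pderiv c p) := by
  funext S; simp only [dG, sing]; split <;> simp

lemma dR_sing (i : Fin n ⊕ Fin n) (T : Finset (Fin n ⊕ Fin n)) (p) :
    dR i (sing T p) = if i ∈ T then
      sing (T.erase i) (((-1:ℚ) ^ ((T.erase i).filter (fun j => idx i < idx j)).card) • p)
    else 0 := by
  by_cases hiT : i ∈ T
  · rw [if_pos hiT]
    funext S
    simp only [dR, sing]
    by_cases hiS : i ∈ S
    · rw [if_pos hiS, if_neg (fun (h : S = T.erase i) => (Finset.notMem_erase i T) (h ▸ hiS)),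
        eq_comm]
    · rw [if_neg hiS]
      by_cases hS : S = T.erase i
      · subst hS
        rw [if_pos (by rw [Finset.insert_erase hiT]), if_pos rfl]
      · rw [if_neg hS, if_neg, smul_zero]
        intro h
        exact hS (by rw [← h, Finset.erase_insert hiS])
  · rw [if_neg hiT]
    funext S
    simp only [dR, sing, Pi.zero_apply]
    by_cases hiS : i ∈ S
    · rw [if_pos hiS]
    · rw [if_neg hiS,
        if_neg (fun (h : insert i S = T) => hiT (h ▸ Finset.mem_insert_self i S)), smul_zero]

lemma dL_sing (i : Fin n ⊕ Fin n) (T : Finset (Fin n ⊕ Fin n)) (p) :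
    dL i (sing T p) = if i ∈ T then
      sing (T.erase i) (((-1:ℚ) ^ ((T.erase i).filter (fun j => idx j < idx i)).card) • p)
    else 0 := by
  by_cases hiT : i ∈ T
  · rw [if_pos hiT]
    funext S
    simp only [dL, sing]
    by_cases hiS : i ∈ S
    · rw [if_pos hiS, if_neg (fun (h : S = T.erase i) => (Finset.notMem_erase i T) (h ▸ hiS)),
        eq_comm]
    · rw [if_neg hiS]
      by_cases hS : S = T.erase i
      · subst hS
        rw [if_pos (by rw [Finset.insert_erase hiT]), if_pos rfl]
      · rw [if_neg hS, if_neg, smul_zero]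
        intro h
        exact hS (by rw [← h, Finset.erase_insert hiS])
  · rw [if_neg hiT]
    funext S
    simp only [dL, sing, Pi.zero_apply]
    by_cases hiS : i ∈ S
    · rw [if_pos hiS]
    · rw [if_neg hiS,
        if_neg (fun (h : insert i S = T) => hiT (h ▸ Finset.mem_insert_self i S)), smul_zero]

lemma sum_antisym {f : Fin n → Fin n → SA n} (h : ∀ a b, f b a = - f a b) :
    ∑ a, ∑ b, f a b = 0 := by
  have key : (∑ a, ∑ b, f a b) = - ∑ a, ∑ b, f a b := by
    nth_rewrite 2 [Finset.sum_comm]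
    rw [← Finset.sum_neg_distrib]
    refine Finset.sum_congr rfl fun a _ => ?_
    rw [← Finset.sum_neg_distrib]
    exact Finset.sum_congr rfl fun b _ => h b a
  have h2 : (∑ a, ∑ b, f a b) + (∑ a, ∑ b, f a b) = 0 := by
    nth_rewrite 2 [key]; exact add_neg_cancel _
  funext S
  have hS := congrFun h2 S
  rw [Pi.add_apply, Pi.zero_apply] at hS
  have h3 : (2 : ℚ) • (∑ a, ∑ b, f a b) S = 0 := by rw [two_smul]; exact hS
  rw [Pi.zero_apply]
  calc (∑ a, ∑ b, f a b) S = ((2:ℚ)⁻¹ * 2) • (∑ a, ∑ b, f a b) S := by norm_num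
    _ = (2:ℚ)⁻¹ • ((2:ℚ) • (∑ a, ∑ b, f a b) S) := by rw [mul_smul]
    _ = 0 := by rw [h3, smul_zero]

section withzero
variable [NeZero n]

/-- Coefficient of the cubic part of `Ω`. -/
noncomputable def c3 (a : Fin n) : MvPolynomial (Fin n) ℚ := if a = 0 then 0 else X a

lemma c3_zero : c3 (0 : Fin n) = 0 := if_pos rfl
lemma c3_ne (a : Fin n) (ha : a ≠ 0) : c3 a = X a := if_neg ha

lemma fin_val_pos (a : Fin n) (ha : a ≠ 0) : 0 < (a : ℕ) :=
  Nat.pos_of_ne_zero (fun h => ha (Fin.ext (by simp [h])))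

lemma n_pos : 0 < n := Nat.pos_of_ne_zero (NeZero.ne n)

lemma sgn_l0_r0 : sgn {Sum.inl (0:Fin n)} {Sum.inr (0:Fin n)} = 1 := by
  rw [sgn_card, Finset.sum_singleton, Finset.sum_singleton, if_neg (by simp)]
  norm_num

lemma sgn_l0_lb (b : Fin n) : sgn {Sum.inl (0:Fin n)} {Sum.inl b} = 1 := by
  rw [sgn_card, Finset.sum_singleton, Finset.sum_singleton, if_neg (by simp)]
  norm_num

lemma sgn_la_l0 (a : Fin n) (ha : a ≠ 0) : sgn {Sum.inl a} {Sum.inl (0:Fin n)} = -1 := by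
  rw [sgn_card, Finset.sum_singleton, Finset.sum_singleton,
    if_pos (by simpa using fin_val_pos a ha)]
  norm_num

lemma sgn_la_pair (a : Fin n) (ha : a ≠ 0) :
    sgn {Sum.inl a} ({Sum.inl 0, Sum.inr 0} : Finset (Fin n ⊕ Fin n)) = -1 := by
  rw [sgn_card, Finset.sum_singleton, Finset.sum_insert (by simp), Finset.sum_singleton,
    if_pos (by simpa using fin_val_pos a ha), if_neg (by simpa using (a.isLt).le)]
  norm_num

lemma sgnTpTq (a b : Fin n) (ha : a ≠ 0) :
    sgn ({Sum.inl a, Sum.inl 0} : Finset (Fin n ⊕ Fin n)) {Sum.inl b, Sum.inr 0}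
      = if (b:ℕ) < (a:ℕ) then -1 else 1 := by
  rw [sgn_card,
    Finset.sum_pair (show (Sum.inl a : Fin n ⊕ Fin n) ≠ Sum.inl 0 by simp [ha]),
    Finset.sum_pair (show (Sum.inl b : Fin n ⊕ Fin n) ≠ Sum.inr 0 by simp),
    Finset.sum_pair (show (Sum.inl b : Fin n ⊕ Fin n) ≠ Sum.inr 0 by simp)]
  rw [if_neg (show ¬ idx (Sum.inr (0:Fin n) : Fin n ⊕ Fin n) < idx (Sum.inl a : Fin n ⊕ Fin n)
      by simpa using (a.isLt).le),
    if_neg (show ¬ idx (Sum.inl b : Fin n ⊕ Fin n) < idx (Sum.inl (0:Fin n) : Fin n ⊕ Fin n)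
      by simp),
    if_neg (show ¬ idx (Sum.inr (0:Fin n) : Fin n ⊕ Fin n) < idx (Sum.inl (0:Fin n) : Fin n ⊕ Fin n)
      by simp)]
  simp only [idx_inl, add_zero]
  split_ifs with h
  · norm_num; exact h
  · norm_num; exact Nat.le_of_not_lt h

lemma sgnTqTp (a b : Fin n) (ha : a ≠ 0) (hb : b ≠ 0) :
    sgn ({Sum.inl a, Sum.inr 0} : Finset (Fin n ⊕ Fin n)) {Sum.inl b, Sum.inl 0}
      = if (b:ℕ) < (a:ℕ) then 1 else -1 := by
  rw [sgn_card,
    Finset.sum_pair (show (Sum.inl a : Fin n ⊕ Fin n) ≠ Sum.inr 0 by simp),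
    Finset.sum_pair (show (Sum.inl b : Fin n ⊕ Fin n) ≠ Sum.inl 0 by simp [hb]),
    Finset.sum_pair (show (Sum.inl b : Fin n ⊕ Fin n) ≠ Sum.inl 0 by simp [hb])]
  rw [if_pos (show idx (Sum.inl (0:Fin n) : Fin n ⊕ Fin n) < idx (Sum.inl a : Fin n ⊕ Fin n)
      by simpa using fin_val_pos a ha),
    if_pos (show idx (Sum.inl b : Fin n ⊕ Fin n) < idx (Sum.inr (0:Fin n) : Fin n ⊕ Fin n)
      by simpa using b.isLt),
    if_pos (show idx (Sum.inl (0:Fin n) : Fin n ⊕ Fin n) < idx (Sum.inr (0:Fin n) : Fin n ⊕ Fin n)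
      by simpa using n_pos)]
  simp only [idx_inl]
  split_ifs with h
  · norm_num; rw [if_pos (show b < a from h)]; norm_num
  · norm_num; rw [if_neg (show ¬ b < a from h)]; norm_num

lemma filtA (a : Fin n) : ({Sum.inl a, Sum.inl 0} : Finset (Fin n ⊕ Fin n)).filter
    (fun j => idx (Sum.inr (0:Fin n) : Fin n ⊕ Fin n) < idx j) = ∅ := by
  rw [Finset.filter_insert, if_neg (by simpa using (a.isLt).le), Finset.filter_singleton,
    if_neg (by simp)]

lemma cardB (a : Fin n) (ha : a ≠ 0) :
    (({Sum.inl a, Sum.inl 0} : Finset (Fin n ⊕ Fin n)).filter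
      (fun j => idx j < idx (Sum.inr (0:Fin n) : Fin n ⊕ Fin n))).card = 2 := by
  rw [Finset.filter_insert, if_pos (by simpa using a.isLt), Finset.filter_singleton,
    if_pos (by simpa using n_pos), Finset.card_insert_of_notMem (by simp [ha]),
    Finset.card_singleton]

lemma cardC (a : Fin n) (ha : a ≠ 0) :
    (({Sum.inl a, Sum.inr 0} : Finset (Fin n ⊕ Fin n)).filter
      (fun j => idx (Sum.inl (0:Fin n) : Fin n ⊕ Fin n) < idx j)).card = 2 := by
  rw [Finset.filter_insert, if_pos (by simpa using fin_val_pos a ha), Finset.filter_singleton,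
    if_pos (by simpa using n_pos), Finset.card_insert_of_notMem (by simp),
    Finset.card_singleton]

lemma filtD (a : Fin n) : ({Sum.inl a, Sum.inr 0} : Finset (Fin n ⊕ Fin n)).filter
    (fun j => idx j < idx (Sum.inl (0:Fin n) : Fin n ⊕ Fin n)) = ∅ := by
  rw [Finset.filter_insert, if_neg (by simp), Finset.filter_singleton, if_neg (by simp)]

lemma eraseT3r (a : Fin n) :
    ({Sum.inl a, Sum.inl 0, Sum.inr 0} : Finset (Fin n ⊕ Fin n)).erase (Sum.inr 0)
      = {Sum.inl a, Sum.inl 0} := by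
  ext x
  cases x <;> simp

lemma eraseT3l (a : Fin n) (ha : a ≠ 0) :
    ({Sum.inl a, Sum.inl 0, Sum.inr 0} : Finset (Fin n ⊕ Fin n)).erase (Sum.inl 0)
      = {Sum.inl a, Sum.inr 0} := by
  ext x
  cases x with
  | inl v =>
    simp only [Finset.mem_erase, Finset.mem_insert, Finset.mem_singleton]
    constructor
    · rintro ⟨h1, h2 | h2 | h2⟩ <;> simp_all
    · rintro (h | h) <;> simp_all
  | inr v => simp

lemma union1 (a b : Fin n) :
    ({Sum.inl b, Sum.inl 0} : Finset (Fin n ⊕ Fin n)) ∪ {Sum.inl a, Sum.inr 0}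
      = ({Sum.inl a, Sum.inl 0} : Finset (Fin n ⊕ Fin n)) ∪ {Sum.inl b, Sum.inr 0} := by
  ext x; simp; tauto

lemma union2 (a b : Fin n) :
    ({Sum.inl b, Sum.inr 0} : Finset (Fin n ⊕ Fin n)) ∪ {Sum.inl a, Sum.inl 0}
      = ({Sum.inl a, Sum.inr 0} : Finset (Fin n ⊕ Fin n)) ∪ {Sum.inl b, Sum.inl 0} := by
  ext x; simp; tauto

lemma disj1 (a b : Fin n) (hab : a ≠ b) (hb : b ≠ 0) :
    Disjoint ({Sum.inl a, Sum.inl 0} : Finset (Fin n ⊕ Fin n)) {Sum.inl b, Sum.inr 0} := by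
  rw [Finset.disjoint_left]
  rintro x hx hx'
  simp only [Finset.mem_insert, Finset.mem_singleton] at hx hx'
  rcases hx with rfl | rfl <;> rcases hx' with h | h <;> simp_all

end withzero
end BRSTAux
/-- for the self-reproducing algebra `[G₁, G_α] = G₁ G_α`
(`α = 2,…,n`), `[G_α, G_β] = 0`, the non-covariant BRST charge
`Ω̃ = η^a G_a - G_a η^a η^1 𝒫₁` is nilpotent: `[Ω̃, Ω̃] = 0`.
(Generator `G₁` of the paper is `Gg 0` here.) -/
theorem minimal_rank_one_brst {n : ℕ} [NeZero n] :
    let C : Fin n → Fin n → MvPolynomial (Fin n) ℚ := fun a b =>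
      if a = b then 0
      else if a = 0 then X 0 * X b
      else if b = 0 then -(X 0 * X a)
      else 0
    let Ω : SA n := (∑ a, amul (ηg a) (Gg a))
      - ∑ a, amul (Gg a) (amul (ηg a) (amul (ηg 0) (Pg 0)))
    bra C Ω Ω = 0 := by
  intro C Ω
  have hCdef : ∀ a b : Fin n, C a b = (if a = b then 0 else if a = 0 then X 0 * X b
      else if b = 0 then -(X 0 * X a) else 0) := fun _ _ => rfl
  have hηg : ∀ a : Fin n, ηg a = sing {Sum.inl a} 1 := fun _ => rfl
  have hGg : ∀ a : Fin n, Gg a = sing ∅ (X a) := fun _ => rfl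
  have hPg : Pg (0 : Fin n) = sing {Sum.inr 0} 1 := rfl
  -- Normal form of `Ω`.
  have hΩ : Ω = ∑ a : Fin n, (sing {Sum.inl a} (X a)
      + sing {Sum.inl a, Sum.inl 0, Sum.inr 0} (c3 a)) := by
    have h1 : ∀ a : Fin n, amul (ηg a) (Gg a) = sing {Sum.inl a} (X a) := by
      intro a
      rw [hηg, hGg, amul_sing_sing, if_pos (Finset.disjoint_empty_right _)]
      simp
    have h2 : amul (ηg (0 : Fin n)) (Pg 0) = sing {Sum.inl 0, Sum.inr 0} 1 := by
      rw [hηg, hPg, amul_sing_sing, if_pos (by simp), ← Finset.insert_eq, sgn_l0_r0]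
      simp
    have h3 : ∀ a : Fin n, amul (Gg a) (amul (ηg a) (amul (ηg 0) (Pg 0)))
        = sing {Sum.inl a, Sum.inl 0, Sum.inr 0} (- c3 a) := by
      intro a
      rw [h2, hηg a, hGg a]
      by_cases ha : a = 0
      · subst ha
        rw [amul_sing_sing, if_neg (by simp), amul_zero, c3_zero, neg_zero, sing_zero]
      · have hinner : amul (sing ({Sum.inl a} : Finset (Fin n ⊕ Fin n)) 1)
            (sing {Sum.inl 0, Sum.inr 0} 1)
            = sing {Sum.inl a, Sum.inl 0, Sum.inr 0} (-1) := by
          rw [amul_sing_sing, if_pos (by simp [Ne.symm ha, ha]), ← Finset.insert_eq, sgn_la_pair a ha]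
          simp
        rw [hinner, amul_sing_sing, if_pos (Finset.disjoint_empty_left _), Finset.empty_union,
          sgn_empty_left, c3_ne a ha]
        simp
    calc Ω = (∑ a : Fin n, amul (ηg a) (Gg a))
        - ∑ a : Fin n, amul (Gg a) (amul (ηg a) (amul (ηg 0) (Pg 0))) := rfl
      _ = (∑ a : Fin n, sing {Sum.inl a} (X a))
          - ∑ a : Fin n, sing {Sum.inl a, Sum.inl 0, Sum.inr 0} (- c3 a) := by
          rw [Finset.sum_congr rfl fun a _ => h1 a, Finset.sum_congr rfl fun a _ => h3 a]
      _ = _ := by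
          rw [← Finset.sum_sub_distrib]
          exact Finset.sum_congr rfl fun a _ => by rw [sing_neg, sub_neg_eq_add]
  -- dG of Ω
  have hdG : ∀ c : Fin n, dG c Ω = sing {Sum.inl c} 1
      + sing {Sum.inl c, Sum.inl 0, Sum.inr 0} (if c = 0 then 0 else 1) := by
    intro c
    rw [hΩ, dG_sum]
    have key : ∀ a : Fin n, dG c (sing {Sum.inl a} (X a)
        + sing {Sum.inl a, Sum.inl 0, Sum.inr 0} (c3 a))
        = (if a = c then sing {Sum.inl c} 1 else 0)
          + (if a = c then sing {Sum.inl c, Sum.inl 0, Sum.inr 0} (if c = 0 then 0 else 1)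
             else 0) := by
      intro a
      rw [dG_add, dG_sing, dG_sing]
      by_cases hac : a = c
      · subst hac
        rw [if_pos rfl, if_pos rfl, pderiv_X_self]
        congr 1
        by_cases ha : a = 0
        · subst ha; rw [c3_zero, if_pos rfl, map_zero]
        · rw [c3_ne a ha, if_neg ha, pderiv_X_self]
      · have h2 : pderiv c (c3 a) = 0 := by
          by_cases ha : a = 0
          · rw [ha, c3_zero, map_zero]
          · rw [c3_ne a ha]; exact pderiv_X_of_ne hac
        rw [if_neg hac, if_neg hac, pderiv_X_of_ne hac, h2, sing_zero, sing_zero, add_zero]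
    rw [Finset.sum_congr rfl fun a _ => key a, Finset.sum_add_distrib,
      Finset.sum_ite_eq' Finset.univ c, Finset.sum_ite_eq' Finset.univ c]
    simp
  -- vanishing ghost derivatives
  have hdRinr : ∀ c : Fin n, c ≠ 0 → dR (Sum.inr c) Ω = 0 := by
    intro c hc
    rw [hΩ, dR_sum]
    refine Finset.sum_eq_zero fun a _ => ?_
    rw [dR_add, dR_sing, dR_sing, if_neg (by simp), if_neg (by simp [hc]), add_zero]
  have hdLinr : ∀ c : Fin n, c ≠ 0 → dL (Sum.inr c) Ω = 0 := by
    intro c hc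
    rw [hΩ, dL_sum]
    refine Finset.sum_eq_zero fun a _ => ?_
    rw [dL_add, dL_sing, dL_sing, if_neg (by simp), if_neg (by simp [hc]), add_zero]
  -- the four nonzero ghost derivatives
  have hdRinr0 : dR (Sum.inr (0:Fin n)) Ω
      = ∑ a : Fin n, sing {Sum.inl a, Sum.inl 0} (c3 a) := by
    rw [hΩ, dR_sum]
    refine Finset.sum_congr rfl fun a _ => ?_
    rw [dR_add, dR_sing, dR_sing, if_neg (by simp), if_pos (by simp), zero_add, eraseT3r a,
      filtA a]
    simp
  have hdLinr0 : dL (Sum.inr (0:Fin n)) Ω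
      = ∑ a : Fin n, sing {Sum.inl a, Sum.inl 0} (c3 a) := by
    rw [hΩ, dL_sum]
    refine Finset.sum_congr rfl fun a _ => ?_
    rw [dL_add, dL_sing, dL_sing, if_neg (by simp), if_pos (by simp), zero_add, eraseT3r a]
    by_cases ha : a = 0
    · rw [ha, c3_zero]
      simp
    · rw [cardB a ha, show ((-1:ℚ))^2 = 1 by norm_num, one_smul]
  have hdRinl0 : dR (Sum.inl (0:Fin n)) Ω
      = sing ∅ (X 0) + ∑ a : Fin n, sing {Sum.inl a, Sum.inr 0} (c3 a) := by
    rw [hΩ, dR_sum]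
    have key : ∀ a : Fin n, dR (Sum.inl (0:Fin n)) (sing {Sum.inl a} (X a)
        + sing {Sum.inl a, Sum.inl 0, Sum.inr 0} (c3 a))
        = (if a = 0 then sing ∅ (X 0) else 0) + sing {Sum.inl a, Sum.inr 0} (c3 a) := by
      intro a
      rw [dR_add, dR_sing, dR_sing]
      congr 1
      · by_cases ha : a = 0
        · subst ha
          rw [if_pos (by simp), if_pos rfl, Finset.erase_singleton]
          rw [Finset.filter_empty, Finset.card_empty, pow_zero, one_smul]
        · rw [if_neg (by simp [Ne.symm ha]), if_neg ha]
      · rw [if_pos (by simp)]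
        by_cases ha : a = 0
        · rw [ha, c3_zero]
          simp
        · rw [eraseT3l a ha, cardC a ha, show ((-1:ℚ))^2 = 1 by norm_num, one_smul]
    rw [Finset.sum_congr rfl fun a _ => key a, Finset.sum_add_distrib,
      Finset.sum_ite_eq' Finset.univ (0:Fin n)]
    simp
  have hdLinl0 : dL (Sum.inl (0:Fin n)) Ω
      = sing ∅ (X 0) + ∑ a : Fin n, sing {Sum.inl a, Sum.inr 0} (c3 a) := by
    rw [hΩ, dL_sum]
    have key : ∀ a : Fin n, dL (Sum.inl (0:Fin n)) (sing {Sum.inl a} (X a)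
        + sing {Sum.inl a, Sum.inl 0, Sum.inr 0} (c3 a))
        = (if a = 0 then sing ∅ (X 0) else 0) + sing {Sum.inl a, Sum.inr 0} (c3 a) := by
      intro a
      rw [dL_add, dL_sing, dL_sing]
      congr 1
      · by_cases ha : a = 0
        · subst ha
          rw [if_pos (by simp), if_pos rfl, Finset.erase_singleton]
          simp
        · rw [if_neg (by simp [Ne.symm ha]), if_neg ha]
      · rw [if_pos (by simp)]
        by_cases ha : a = 0
        · rw [ha, c3_zero]
          simp
        · rw [eraseT3l a ha, filtD a]
          simp
    rw [Finset.sum_congr rfl fun a _ => key a, Finset.sum_add_distrib,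
      Finset.sum_ite_eq' Finset.univ (0:Fin n)]
    simp
  -- antisymmetric cross terms
  have anti1 : ∀ a b : Fin n,
      amul (sing ({Sum.inl b, Sum.inl 0} : Finset (Fin n ⊕ Fin n)) (c3 b))
        (sing {Sum.inl a, Sum.inr 0} (c3 a))
      = - amul (sing ({Sum.inl a, Sum.inl 0} : Finset (Fin n ⊕ Fin n)) (c3 a))
          (sing {Sum.inl b, Sum.inr 0} (c3 b)) := by
    intro a b
    rw [amul_sing_sing, amul_sing_sing]
    by_cases ha : a = 0
    · rw [ha, c3_zero]
      split_ifs <;> simp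
    · by_cases hb : b = 0
      · rw [hb, c3_zero]
        split_ifs <;> simp
      · by_cases hab : a = b
        · subst hab
          rw [if_neg (Finset.not_disjoint_iff.mpr ⟨Sum.inl a, by simp, by simp⟩), neg_zero]
        · rw [if_pos (disj1 b a (Ne.symm hab) ha), if_pos (disj1 a b hab hb), union1 a b,
            ← sing_neg]
          congr 1
          rw [sgnTpTq b a hb, sgnTpTq a b ha, c3_ne a ha, c3_ne b hb]
          have hab' : (a:ℕ) ≠ (b:ℕ) := fun h => hab (Fin.ext h)
          rcases lt_or_gt_of_ne hab' with h | h
          · rw [if_pos h, if_neg (by omega), neg_one_smul, one_smul, mul_comm]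
          · rw [if_neg (by omega), if_pos h, neg_one_smul, one_smul, neg_neg, mul_comm]
  have anti2 : ∀ a b : Fin n,
      amul (sing ({Sum.inl b, Sum.inr 0} : Finset (Fin n ⊕ Fin n)) (c3 b))
        (sing {Sum.inl a, Sum.inl 0} (c3 a))
      = - amul (sing ({Sum.inl a, Sum.inr 0} : Finset (Fin n ⊕ Fin n)) (c3 a))
          (sing {Sum.inl b, Sum.inl 0} (c3 b)) := by
    intro a b
    rw [amul_sing_sing, amul_sing_sing]
    by_cases ha : a = 0
    · rw [ha, c3_zero]
      split_ifs <;> simp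
    · by_cases hb : b = 0
      · rw [hb, c3_zero]
        split_ifs <;> simp
      · by_cases hab : a = b
        · subst hab
          rw [if_neg (Finset.not_disjoint_iff.mpr ⟨Sum.inl a, by simp, by simp⟩), neg_zero]
        · rw [if_pos (disj1 a b hab hb).symm, if_pos (disj1 b a (Ne.symm hab) ha).symm,
            union2 a b, ← sing_neg]
          congr 1
          rw [sgnTqTp b a hb ha, sgnTqTp a b ha hb, c3_ne a ha, c3_ne b hb]
          have hab' : (a:ℕ) ≠ (b:ℕ) := fun h => hab (Fin.ext h)
          rcases lt_or_gt_of_ne hab' with h | h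
          · rw [if_pos h, if_neg (by omega), one_smul, neg_one_smul, neg_neg, mul_comm]
          · rw [if_neg (by omega), if_pos h, one_smul, neg_one_smul, mul_comm]
  -- products for the ghost part
  have hPD : amul (∑ a : Fin n, sing {Sum.inl a, Sum.inl 0} (c3 a))
      (sing ∅ (X 0) + ∑ b : Fin n, sing {Sum.inl b, Sum.inr 0} (c3 b))
      = ∑ a : Fin n, sing {Sum.inl a, Sum.inl 0} (c3 a * X 0) := by
    rw [amul_add_right, amul_sum_left, amul_sum_left]
    have h1 : ∀ a : Fin n,
        amul (sing ({Sum.inl a, Sum.inl 0} : Finset (Fin n ⊕ Fin n)) (c3 a)) (sing ∅ (X 0))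
          = sing {Sum.inl a, Sum.inl 0} (c3 a * X 0) := by
      intro a
      rw [amul_sing_sing, if_pos (Finset.disjoint_empty_right _)]
      simp
    have h2 : (∑ a : Fin n,
        amul (sing ({Sum.inl a, Sum.inl 0} : Finset (Fin n ⊕ Fin n)) (c3 a))
          (∑ b : Fin n, sing {Sum.inl b, Sum.inr 0} (c3 b))) = 0 := by
      rw [Finset.sum_congr rfl fun a _ => amul_sum_right _ _ _]
      exact sum_antisym (fun a b => anti1 a b)
    rw [Finset.sum_congr rfl fun a _ => h1 a, h2, add_zero]
  have hDP : amul (sing ∅ (X 0) + ∑ b : Fin n, sing {Sum.inl b, Sum.inr 0} (c3 b))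
      (∑ a : Fin n, sing {Sum.inl a, Sum.inl 0} (c3 a))
      = ∑ a : Fin n, sing {Sum.inl a, Sum.inl 0} (X 0 * c3 a) := by
    rw [amul_add_left, amul_sum_right, amul_sum_left]
    have h1 : ∀ a : Fin n,
        amul (sing ∅ (X 0)) (sing ({Sum.inl a, Sum.inl 0} : Finset (Fin n ⊕ Fin n)) (c3 a))
          = sing {Sum.inl a, Sum.inl 0} (X 0 * c3 a) := by
      intro a
      rw [amul_sing_sing, if_pos (Finset.disjoint_empty_left _), Finset.empty_union,
        sgn_empty_left]
      simp
    have h2 : (∑ b : Fin n,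
        amul (sing ({Sum.inl b, Sum.inr 0} : Finset (Fin n ⊕ Fin n)) (c3 b))
          (∑ a : Fin n, sing {Sum.inl a, Sum.inl 0} (c3 a))) = 0 := by
      rw [Finset.sum_congr rfl fun b _ => amul_sum_right _ _ _]
      exact sum_antisym (fun a b => anti2 a b)
    rw [Finset.sum_congr rfl fun a _ => h1 a, h2, add_zero]
  -- the G-part
  have hG : (∑ a : Fin n, ∑ b : Fin n, C a b • amul (dG a Ω) (dG b Ω))
      = (∑ a : Fin n, sing {Sum.inl a, Sum.inl 0} (X 0 * c3 a))
        + ∑ b : Fin n, sing {Sum.inl b, Sum.inl 0} (X 0 * c3 b) := by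
    have key : ∀ a b : Fin n, C a b • amul (dG a Ω) (dG b Ω)
        = (if b = 0 then sing {Sum.inl a, Sum.inl 0} (X 0 * c3 a) else 0)
          + (if a = 0 then sing {Sum.inl b, Sum.inl 0} (X 0 * c3 b) else 0) := by
      intro a b
      rw [hCdef a b, hdG a, hdG b]
      by_cases ha : a = 0 <;> by_cases hb : b = 0
      · subst ha; subst hb
        rw [if_pos rfl, zero_smul, if_pos rfl, c3_zero, mul_zero, sing_zero, add_zero]
      · subst ha
        rw [if_neg (fun h => hb h.symm), if_pos rfl, if_pos rfl, sing_zero, add_zero,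
          if_neg hb, if_neg hb, if_pos rfl, zero_add]

        have e1 : amul (sing ({Sum.inl (0:Fin n)} : Finset (Fin n ⊕ Fin n)) 1)
            (sing {Sum.inl b} 1) = sing {Sum.inl 0, Sum.inl b} (1 : MvPolynomial (Fin n) ℚ) := by
          rw [amul_sing_sing, if_pos (by simp [hb, Ne.symm hb]), ← Finset.insert_eq, sgn_l0_lb b]
          simp
        have e2 : amul (sing ({Sum.inl (0:Fin n)} : Finset (Fin n ⊕ Fin n)) 1)
            (sing ({Sum.inl b, Sum.inl 0, Sum.inr 0} : Finset (Fin n ⊕ Fin n)) 1) = 0 := by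
          rw [amul_sing_sing,
            if_neg (Finset.not_disjoint_iff.mpr ⟨Sum.inl 0, by simp, by simp⟩)]
        rw [amul_add_right, e1, e2, add_zero, smul_sing, Finset.pair_comm, c3_ne b hb,
          mul_one]
      · subst hb
        rw [if_neg ha, if_neg ha, if_pos rfl, if_neg ha, if_pos rfl, sing_zero, add_zero,
          if_pos rfl, if_neg ha, add_zero]
        have e1 : amul (sing ({Sum.inl a} : Finset (Fin n ⊕ Fin n)) 1)
            (sing {Sum.inl (0:Fin n)} 1)
            = sing {Sum.inl a, Sum.inl 0} (-1 : MvPolynomial (Fin n) ℚ) := by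
          rw [amul_sing_sing, if_pos (by simp [Ne.symm ha, ha]), ← Finset.insert_eq, sgn_la_l0 a ha]
          simp
        have e2 : amul (sing ({Sum.inl a, Sum.inl 0, Sum.inr 0} : Finset (Fin n ⊕ Fin n)) 1)
            (sing {Sum.inl (0:Fin n)} 1) = 0 := by
          rw [amul_sing_sing,
            if_neg (Finset.not_disjoint_iff.mpr ⟨Sum.inl 0, by simp, by simp⟩)]
        rw [amul_add_left, e1, e2, add_zero, smul_sing, c3_ne a ha]
        congr 1
        ring
      · by_cases hab : a = b
        · rw [if_pos hab, zero_smul, if_neg hb, if_neg ha, add_zero]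
        · rw [if_neg hab, if_neg ha, if_neg hb, zero_smul, if_neg hb, if_neg ha, add_zero]
    rw [Finset.sum_congr rfl fun a _ => Finset.sum_congr rfl fun b _ => key a b]
    simp only [Finset.sum_add_distrib]
    congr 1
    · exact Finset.sum_congr rfl fun a _ => by
        rw [Finset.sum_ite_eq' Finset.univ (0:Fin n)]; simp
    · rw [Finset.sum_comm]
      exact Finset.sum_congr rfl fun b _ => by
        rw [Finset.sum_ite_eq' Finset.univ (0:Fin n)]; simp
  -- assemble
  show bra C Ω Ω = 0
  unfold bra
  have hgh : (∑ a : Fin n, (amul (dR (Sum.inr a) Ω) (dL (Sum.inl a) Ω)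
      + amul (dR (Sum.inl a) Ω) (dL (Sum.inr a) Ω)))
      = (∑ a : Fin n, sing {Sum.inl a, Sum.inl 0} (c3 a * X 0))
        + ∑ a : Fin n, sing {Sum.inl a, Sum.inl 0} (X 0 * c3 a) := by
    rw [Finset.sum_eq_single_of_mem (0:Fin n) (Finset.mem_univ _)]
    · rw [hdRinr0, hdLinl0, hdRinl0, hdLinr0, hPD, hDP]
    · intro b _ hb
      rw [hdRinr b hb, hdLinr b hb, zero_amul, amul_zero, add_zero]
  rw [hG, hgh]
  have hc : (∑ a : Fin n, sing {Sum.inl a, Sum.inl 0} (c3 a * X 0))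
      = ∑ a : Fin n, sing {Sum.inl a, Sum.inl 0} (X 0 * c3 a) :=
    Finset.sum_congr rfl fun a _ => by rw [mul_comm]
  rw [hc, sub_self]
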